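/- Let g be a Lie algebra over ℂ containing elements e, f₃, f₂, f₁, f₀ with brackets [e, f₃] = f₂, [e, f₂] = f₁, [e, f₁] = f₀, [e, f₀] = 0, and [f₁, f₂] = 6h with h central among {f₀,f₁,f₂,f₃} and [e,h]=0 not assumed; assume moreover [f₂, f₂] = 0 trivially and that f₂ commutes with h. Then in the universal enveloping algebra U(g), for every q ≥ 0: e·f₂^{(q)} ≡ 3h·f₂^{(q-2)} modulo the left ideal generated by e, f₀, and f₁, where x^{(p)} = x^p/p!, with the convention x^{(p)} = 0 for p < 0. -/

import Mathlib

open UniversalEnvelopingAlgebra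

attribute [local instance 100] LieRing.ofAssociativeRing

/-- in U(g), with [e,f₃]=f₂, [e,f₂]=f₁, [e,f₁]=f₀, [e,f₀]=0, [f₁,f₂]=6h,
h commuting with f₀,f₁,f₂,f₃, for every q ≥ 0 one has
e·f₂^{(q)} ≡ 3h·f₂^{(q-2)} modulo the left ideal U(g)(ℂe + ℂf₀ + ℂf₁),
where x^{(p)} = x^p/p! and x^{(p)} = 0 for p < 0. -/
theorem stmt9 {L : Type*} [LieRing L] [LieAlgebra ℂ L]
    (e f₃ f₂ f₁ f₀ h : L)
    (h3 : ⁅e, f₃⁆ = f₂) (h2 : ⁅e, f₂⁆ = f₁) (h1 : ⁅e, f₁⁆ = f₀) (h0 : ⁅e, f₀⁆ = 0)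
    (hbr : ⁅f₁, f₂⁆ = (6 : ℤ) • h)
    (hc0 : ⁅h, f₀⁆ = 0) (hc1 : ⁅h, f₁⁆ = 0) (hc2 : ⁅h, f₂⁆ = 0) (hc3 : ⁅h, f₃⁆ = 0)
    (q : ℕ) :
    ((q.factorial : ℂ)⁻¹ • (ι ℂ e * (ι ℂ f₂) ^ q)
        - (if 2 ≤ q then ((q - 2).factorial : ℂ)⁻¹ • (3 * ι ℂ h * (ι ℂ f₂) ^ (q - 2)) else 0))
      ∈ Submodule.span (UniversalEnvelopingAlgebra ℂ L)
          ({ι ℂ e, ι ℂ f₀, ι ℂ f₁} : Set (UniversalEnvelopingAlgebra ℂ L)) := by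
  set A := UniversalEnvelopingAlgebra ℂ L
  set E := ι ℂ e with hE
  set F := ι ℂ f₂ with hF
  set F1 := ι ℂ f₁ with hF1
  set F0 := ι ℂ f₀ with hF0
  set H := ι ℂ h with hH
  set S : Set A := {E, F0, F1} with hS
  -- basic relations in U(g)
  have rEF : E * F = F * E + F1 := by
    have t := (ι ℂ : L →ₗ⁅ℂ⁆ A).map_lie e f₂
    rw [h2, Ring.lie_def] at t
    rw [← hF1] at t
    rw [t]; abel
  have rF1F : F1 * F = F * F1 + (6:ℂ) • H := by
    have hbr' : ⁅f₁, f₂⁆ = (6:ℂ) • h := by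
      rw [hbr, ← Int.cast_smul_eq_zsmul ℂ]; norm_num
    have t := (ι ℂ : L →ₗ⁅ℂ⁆ A).map_lie f₁ f₂
    rw [hbr', Ring.lie_def, map_smul] at t
    rw [← hH, ← hF1, ← hF] at t
    rw [t]; abel
  have rHF : H * F = F * H := by
    have t := (ι ℂ : L →ₗ⁅ℂ⁆ A).map_lie h f₂
    rw [hc2, Ring.lie_def] at t
    rw [← hH, ← hF] at t
    have t2 : H * F - F * H = 0 := by rw [← t]; simp
    rw [sub_eq_zero] at t2; exact t2
  have hcomm : ∀ n : ℕ, F^n * H = H * F^n := by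
    intro n
    induction n with
    | zero => simp
    | succ m ih => rw [pow_succ, mul_assoc, ← rHF, ← mul_assoc, ih, mul_assoc]
  -- the key commutation identity
  have key : ∀ n : ℕ, E * F^(n+2) = F^(n+2) * E + ((n:ℂ)+2) • (F^(n+1) * F1)
      + (3*((n:ℂ)+2)*((n:ℂ)+1)) • (H * F^n) := by
    intro n
    induction n with
    | zero =>
      have base : E * F^2 = F^2*E + (2:ℂ)•(F*F1) + (6:ℂ)•H := by
        calc E * F^2 = (E*F)*F := by rw [sq, ← mul_assoc]
          _ = (F*E)*F + F1*F := by rw [rEF, add_mul]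
          _ = F*(E*F) + (F*F1 + (6:ℂ)•H) := by rw [rF1F, mul_assoc]
          _ = F*(F*E) + F*F1 + (F*F1 + (6:ℂ)•H) := by rw [rEF, mul_add, add_assoc]
          _ = F^2*E + (2:ℂ)•(F*F1) + (6:ℂ)•H := by rw [sq, mul_assoc]; module
      simp only [Nat.cast_zero, zero_add, pow_one, pow_zero, mul_one, Nat.zero_add]
      rw [base]; module
    | succ m ih =>
      have e1 : E * F^(m+1+2) = (E * F^(m+2)) * F := by rw [pow_succ, ← mul_assoc]
      rw [e1, ih, add_mul, add_mul, smul_mul_assoc, smul_mul_assoc]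
      rw [mul_assoc, rEF]
      rw [mul_assoc (F^(m+1)) F1 F, rF1F]
      rw [mul_assoc H (F^m) F, ← pow_succ]
      rw [mul_add (F^(m+2)), ← mul_assoc (F^(m+2)) F E, ← pow_succ]
      rw [mul_add (F^(m+1)), ← mul_assoc (F^(m+1)) F F1, ← pow_succ, mul_smul_comm, hcomm]
      push_cast
      simp only [pow_succ]
      module
  -- membership helper
  have memS : ∀ (c : ℂ) (a s : A), s ∈ S →
      c • (a * s) ∈ Submodule.span A S := by
    intro c a s hs
    apply Submodule.smul_of_tower_mem
    rw [← smul_eq_mul]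
    exact Submodule.smul_mem _ _ (Submodule.subset_span hs)
  have hEmem : E ∈ S := by simp [hS]
  have hF1mem : F1 ∈ S := by simp [hS]
  match q with
  | 0 =>
    simp only [show ¬ (2 ≤ 0) by omega, if_false, Nat.factorial_zero, pow_zero,
      mul_one, Nat.cast_one, inv_one, one_smul, sub_zero]
    exact Submodule.subset_span hEmem
  | 1 =>
    simp only [show ¬ (2 ≤ 1) by omega, if_false, Nat.factorial_one, pow_one,
      Nat.cast_one, inv_one, one_smul, sub_zero]
    rw [rEF]
    exact add_mem (by simpa using memS 1 F E hEmem) (Submodule.subset_span hF1mem)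
  | (n+2) =>
    have hfac : ((n+2) - 2) = n := by omega
    rw [if_pos (by omega : 2 ≤ n + 2), hfac]
    have h3s : 3 * H * F^n = (3:ℂ) • (H * F^n) := by
      rw [mul_assoc, Algebra.smul_def, map_ofNat]
    have hne2 : ((n).factorial : ℂ) ≠ 0 := Nat.cast_ne_zero.mpr (Nat.factorial_ne_zero _)
    have a1 : ((n:ℂ)+2) ≠ 0 := by
      have t : ((n+2:ℕ):ℂ) ≠ 0 := Nat.cast_ne_zero.mpr (by omega)
      push_cast at t; exact t
    have a2 : ((n:ℂ)+1) ≠ 0 := by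
      have t : ((n+1:ℕ):ℂ) ≠ 0 := Nat.cast_ne_zero.mpr (by omega)
      push_cast at t; exact t
    have hfe : (((n+2).factorial : ℕ) : ℂ) = ((n:ℂ)+2)*((n:ℂ)+1)*((n.factorial : ℕ):ℂ) := by
      rw [show (n+2).factorial = (n+2)*((n+1)*n.factorial) from by
        rw [← Nat.factorial_succ, ← Nat.factorial_succ]]
      push_cast; ring
    have heq : ((n+2).factorial : ℂ)⁻¹ • (E * F ^ (n+2))
        - ((n.factorial : ℂ)⁻¹ • (3 * H * F ^ n))
        = (((n+2).factorial : ℂ)⁻¹) • (F^(n+2) * E)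
          + (((n+2).factorial : ℂ)⁻¹ * ((n:ℂ)+2)) • (F^(n+1) * F1) := by
      rw [key n, h3s, hfe]
      match_scalars <;> (field_simp; try ring)
    rw [heq]
    exact add_mem (memS _ _ _ hEmem) (memS _ _ _ hF1mem)
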